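/- arXiv:1502.03621 — 3 statements merged into one kernel-verified Lean document; each statement's English description precedes it below -/
import Mathlib

section
/- If every function from Cantor space to ℕ is continuous, then for each such φ there exists a point g in Cantor space at which φ attains its maximum value, i.e. φ(g) ≥ φ(f) for all f; moreover g can be chosen of the form σ extended by zeros for some finite binary string σ. -/
theorem stmt_1 (hcont : ∀ φ : (ℕ → Bool) → ℕ, Continuous φ)
    (φ : (ℕ → Bool) → ℕ) :
    ∃ σ : List Bool, ∀ f : ℕ → Bool, φ f ≤ φ (fun i => σ.getD i false) := by
  have hc : Continuous φ := hcont φ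
  -- maximizer by compactness
  obtain ⟨g, hg⟩ := hc.exists_forall_ge
    (by rw [Filter.cocompact_eq_bot]; exact Filter.tendsto_bot)
  -- the preimage of {φ g} is open
  have hopen : IsOpen (φ ⁻¹' {φ g}) := (isOpen_discrete _).preimage hc
  obtain ⟨I, u, hu, hsub⟩ := (isOpen_pi_iff.mp hopen) g rfl
  set n := (I.sup id) + 1 with hn
  refine ⟨List.ofFn (fun i : Fin n => g i), fun f => ?_⟩
  have hmem : (fun i => (List.ofFn fun i : Fin n => g i).getD i false) ∈ φ ⁻¹' {φ g} := by
    apply hsub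
    intro i hi
    have hi' : i < n := Nat.lt_succ_of_le (Finset.le_sup (f := id) hi)
    have hlen : i < (List.ofFn fun i : Fin n => g i).length := by rw [List.length_ofFn]; exact hi'
    show (List.ofFn fun i : Fin n => g i).getD i false ∈ u i
    rw [List.getD_eq_getElem _ _ hlen, List.getElem_ofFn]
    exact (hu i hi).2
  rw [Set.mem_preimage, Set.mem_singleton_iff] at hmem
  rw [hmem]
  exact hg f
end

section
/- Continuous fan theorem: if A ⊆ Cantor × ℕ is such that {α : A(α,x)} is open for every x, and for every α in Cantor space there exists x with A(α, x), then there exists y such that for every α there exists x such that every β agreeing with α on the first y values satisfies A(β, x). -/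
open PiNat Set

theorem stmt_4 (A : (ℕ → Bool) → ℕ → Prop)
    (hopen : ∀ x : ℕ, IsOpen {α : ℕ → Bool | A α x})
    (htot : ∀ α : ℕ → Bool, ∃ x : ℕ, A α x) :
    ∃ y : ℕ, ∀ α : ℕ → Bool, ∃ x : ℕ,
      ∀ β : ℕ → Bool, (∀ i < y, α i = β i) → A β x := by
  set U : ℕ → Set (ℕ → Bool) :=
    fun n => {α | ∃ x, ∀ β : ℕ → Bool, (∀ i < n, α i = β i) → A β x} with hU
  have hUopen : ∀ n, IsOpen (U n) := by
    intro n
    rw [isOpen_iff_forall_mem_open]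
    intro α ⟨x, hx⟩
    refine ⟨cylinder α n, ?_, isOpen_cylinder _ _ _, self_mem_cylinder _ _⟩
    intro γ hγ
    exact ⟨x, fun β hβ => hx β fun i hi => ((hγ i hi).symm.trans (hβ i hi))⟩
  have hcover : univ ⊆ ⋃ n, U n := by
    intro α _
    obtain ⟨x, hx⟩ := htot α
    obtain ⟨v, ⟨γ, n, rfl⟩, hαv, hvs⟩ :=
      (isTopologicalBasis_cylinders (fun _ : ℕ => Bool)).exists_subset_of_mem_open hx (hopen x)
    refine mem_iUnion.2 ⟨n, x, fun β hβ => hvs ?_⟩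
    intro i hi
    exact (hβ i hi).symm.trans (hαv i hi)
  obtain ⟨t, ht⟩ := isCompact_univ.elim_finite_subcover U hUopen hcover
  rcases t.eq_empty_or_nonempty with rfl | hne
  · simpa using ht (mem_univ (fun _ => false))
  obtain ⟨m, hm⟩ := t.exists_max_image id hne
  refine ⟨m, fun α => ?_⟩
  obtain ⟨n, hn, x, hx⟩ := mem_iUnion₂.1 (ht (mem_univ α))
  exact ⟨x, fun β hβ => hx β fun i hi => hβ i (lt_of_lt_of_le hi (hm.2 n hn))⟩
end

section
/- Every continuous function φ : Cantor → ℕ has an associate: there is α : (List {0,1}) → ℕ such that (a) for every f in Cantor space there exists n with α(f↾n) > 0, and (b) whenever α(f↾n) > 0 and α(f↾k) = 0 for all k < n, then α(f↾n) = φ(f) + 1. -/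
/-- The list of the first `n` values of `f`. -/
def restrict (f : ℕ → Bool) (n : ℕ) : List Bool := List.ofFn (fun i : Fin n => f i)

lemma restrict_length (f : ℕ → Bool) (n : ℕ) : (restrict f n).length = n := by
  simp [restrict]

lemma restrict_getD (f : ℕ → Bool) (n : ℕ) {i : ℕ} (hi : i < n) :
    (restrict f n).getD i false = f i := by
  rw [List.getD_eq_getElem _ _ (by simp [restrict_length, hi])]
  simp [restrict]

lemma restrict_eq_iff (f g : ℕ → Bool) (n : ℕ) :
    restrict g n = restrict f n ↔ ∀ i < n, g i = f i := by
  constructor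
  · intro h i hi
    have := congrArg (fun l => l.getD i false) h
    rwa [restrict_getD g n hi, restrict_getD f n hi] at this
  · intro h
    simp only [restrict, List.ofFn_inj]
    funext i
    exact h i i.2

/-- continuity gives a modulus at each point -/
lemma modulus (φ : (ℕ → Bool) → ℕ) (hφ : Continuous φ) (f : ℕ → Bool) :
    ∃ n : ℕ, ∀ g : ℕ → Bool, (∀ i < n, g i = f i) → φ g = φ f := by
  have hopen : IsOpen (φ ⁻¹' {φ f}) := (isOpen_discrete _).preimage hφ
  rw [isOpen_pi_iff] at hopen
  obtain ⟨I, u, hIu, hsub⟩ := hopen f rfl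
  refine ⟨(I.sup id) + 1, fun g hg => ?_⟩
  have : g ∈ (I : Set ℕ).pi u := by
    intro i hi
    simp only [Finset.mem_coe] at hi
    have : g i = f i := hg i (Nat.lt_succ_of_le (Finset.le_sup (f := id) hi))
    rw [this]
    exact (hIu i hi).2
  exact hsub this

theorem stmt_10 (φ : (ℕ → Bool) → ℕ) (hφ : Continuous φ) :
    ∃ α : List Bool → ℕ,
      (∀ f : ℕ → Bool, ∃ n : ℕ, 0 < α (restrict f n)) ∧
      (∀ (f : ℕ → Bool) (n : ℕ), 0 < α (restrict f n) →
        (∀ k < n, α (restrict f k) = 0) → α (restrict f n) = φ f + 1) := by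
  classical
  refine ⟨fun s =>
    if ∀ g : ℕ → Bool, restrict g s.length = s → φ g = φ (fun i => s.getD i false)
    then φ (fun i => s.getD i false) + 1 else 0, ?_, ?_⟩
  · intro f
    obtain ⟨n, hn⟩ := modulus φ hφ f
    refine ⟨n, ?_⟩
    have hext : φ (fun i => (restrict f n).getD i false) = φ f := by
      apply hn
      intro i hi
      exact restrict_getD f n hi
    have hcond : ∀ g : ℕ → Bool, restrict g (restrict f n).length = restrict f n →
        φ g = φ (fun i => (restrict f n).getD i false) := by
      intro g hg
      rw [restrict_length] at hg
      rw [hext]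
      exact hn g ((restrict_eq_iff f g n).mp hg)
    simp only [if_pos hcond]
    exact Nat.succ_pos _
  · intro f n hpos _
    by_cases hcond : ∀ g : ℕ → Bool, restrict g (restrict f n).length = restrict f n →
        φ g = φ (fun i => (restrict f n).getD i false)
    · have hf : φ f = φ (fun i => (restrict f n).getD i false) := by
        apply hcond
        rw [restrict_length]
      simp only [if_pos hcond, hf]
    · simp only [if_neg hcond] at hpos
      omega
end
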